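/- For radially closed star sets A₁, A₂ ⊆ ℝ^d, the radial excess e_r(A₁,A₂) := sup_{a ∈ A₁} d_r(a,A₂) equals sup_{x ∈ ℝ^d} (d_r(x,A₂) − d_r(x,A₁)). -/

import Mathlib

open scoped ENNReal

noncomputable section

/-- Radial function of a set `A ⊆ ℝ^d` in direction `θ`. -/
def radialFn {d : ℕ} (A : Set (EuclideanSpace ℝ (Fin d)))
    (θ : EuclideanSpace ℝ (Fin d)) : ℝ≥0∞ :=
  sSup (ENNReal.ofReal '' {r : ℝ | 0 ≤ r ∧ r • θ ∈ A})

/-- A star set: nonempty and closed under scaling by `t ∈ [0,1]`. -/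
def IsStarSet {d : ℕ} (A : Set (EuclideanSpace ℝ (Fin d))) : Prop :=
  A.Nonempty ∧ ∀ a ∈ A, ∀ t : ℝ, 0 ≤ t → t ≤ 1 → t • a ∈ A

/-- A star body: a radially closed star set. -/
def IsStarBody {d : ℕ} (A : Set (EuclideanSpace ℝ (Fin d))) : Prop :=
  IsStarSet A ∧ ∀ θ : EuclideanSpace ℝ (Fin d), ‖θ‖ = 1 → radialFn A θ ≠ ⊤ →
    (radialFn A θ).toReal • θ ∈ A

open scoped Classical in
/-- The radial distance from a point `x` to a star body `A`:
`0` if `x ∈ A`, and `‖x‖ - ρ_A(x/‖x‖)` otherwise. -/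
def radialDist {d : ℕ} (x : EuclideanSpace ℝ (Fin d))
    (A : Set (EuclideanSpace ℝ (Fin d))) : ℝ :=
  if x ∈ A then 0 else ‖x‖ - (radialFn A (‖x‖⁻¹ • x)).toReal

lemma zero_mem_of_isStarSet {d : ℕ} {A : Set (EuclideanSpace ℝ (Fin d))}
    (h : IsStarSet A) : (0 : EuclideanSpace ℝ (Fin d)) ∈ A := by
  obtain ⟨⟨a, ha⟩, hs⟩ := h
  simpa using hs a ha 0 le_rfl zero_le_one

lemma smul_mem_of_le {d : ℕ} {A : Set (EuclideanSpace ℝ (Fin d))} (h : IsStarSet A)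
    {θ : EuclideanSpace ℝ (Fin d)} {r s : ℝ} (hr : r • θ ∈ A) (hs : 0 ≤ s) (hsr : s ≤ r) :
    s • θ ∈ A := by
  rcases eq_or_lt_of_le (hs.trans hsr) with h0 | h0
  · have hs0 : s = 0 := le_antisymm (hsr.trans h0.symm.le) hs
    rw [hs0, h0]
    exact hr
  · have := h.2 _ hr (s / r) (div_nonneg hs h0.le) (div_le_one_of_le₀ hsr h0.le)
    rwa [smul_smul, div_mul_cancel₀ _ h0.ne'] at this

lemma le_radialFn {d : ℕ} {A : Set (EuclideanSpace ℝ (Fin d))}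
    {θ : EuclideanSpace ℝ (Fin d)} {r : ℝ} (hr : 0 ≤ r) (hmem : r • θ ∈ A) :
    ENNReal.ofReal r ≤ radialFn A θ :=
  le_sSup ⟨r, ⟨hr, hmem⟩, rfl⟩

lemma smul_mem_of_radialFn_top {d : ℕ} {A : Set (EuclideanSpace ℝ (Fin d))}
    (h : IsStarSet A) {θ : EuclideanSpace ℝ (Fin d)} (htop : radialFn A θ = ⊤)
    {r : ℝ} (hr : 0 ≤ r) : r • θ ∈ A := by
  have hlt : ENNReal.ofReal r < radialFn A θ := htop ▸ ENNReal.ofReal_lt_top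
  obtain ⟨b, hb, hltb⟩ := lt_sSup_iff.mp hlt
  obtain ⟨s, ⟨hs0, hsA⟩, rfl⟩ := hb
  have hrs : r < s := by
    by_contra hc
    exact absurd (ENNReal.ofReal_le_ofReal (not_lt.mp hc)) (not_le.mpr hltb)
  exact smul_mem_of_le h hsA hr hrs.le

lemma radialFn_ne_top_of_not_mem {d : ℕ} {A : Set (EuclideanSpace ℝ (Fin d))}
    (h : IsStarSet A) {x : EuclideanSpace ℝ (Fin d)} (hx : x ∉ A) (hx0 : x ≠ 0) :
    radialFn A (‖x‖⁻¹ • x) ≠ ⊤ := by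
  intro htop
  apply hx
  have := smul_mem_of_radialFn_top h htop (norm_nonneg x)
  rwa [smul_smul, mul_inv_cancel₀ (norm_ne_zero_iff.mpr hx0), one_smul] at this

lemma toReal_radialFn_le_norm {d : ℕ} {A : Set (EuclideanSpace ℝ (Fin d))}
    (hA : IsStarBody A) {x : EuclideanSpace ℝ (Fin d)} (hx : x ∉ A) (hx0 : x ≠ 0) :
    (radialFn A (‖x‖⁻¹ • x)).toReal ≤ ‖x‖ := by
  by_contra hc
  push_neg at hc
  have hθ1 : ‖‖x‖⁻¹ • x‖ = 1 := by
    rw [norm_smul, norm_inv, norm_norm, inv_mul_cancel₀ (norm_ne_zero_iff.mpr hx0)]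
  have hmem := hA.2 _ hθ1 (radialFn_ne_top_of_not_mem hA.1 hx hx0)
  have := smul_mem_of_le hA.1 hmem (norm_nonneg x) hc.le
  rw [smul_smul, mul_inv_cancel₀ (norm_ne_zero_iff.mpr hx0), one_smul] at this
  exact hx this

theorem radialExcess_eq_sup_diff {d : ℕ} (A₁ A₂ : Set (EuclideanSpace ℝ (Fin d)))
    (hA₁ : IsStarBody A₁) (hA₂ : IsStarBody A₂) :
    (⨆ a : A₁, ENNReal.ofReal (radialDist (a : EuclideanSpace ℝ (Fin d)) A₂)) =
      ⨆ x : EuclideanSpace ℝ (Fin d),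
        ENNReal.ofReal (radialDist x A₂ - radialDist x A₁) := by
  have h1 := hA₁.1
  have h2 := hA₂.1
  apply le_antisymm
  · apply iSup_le
    rintro ⟨a, ha⟩
    refine le_trans (le_of_eq ?_) (le_iSup _ a)
    have : radialDist a A₁ = 0 := by simp only [radialDist, if_pos ha]
    rw [this, sub_zero]
  · apply iSup_le
    intro x
    by_cases hx1 : x ∈ A₁
    · refine le_trans (le_of_eq ?_) (le_iSup _ (⟨x, hx1⟩ : A₁))
      have : radialDist x A₁ = 0 := by simp only [radialDist, if_pos hx1]
      rw [this, sub_zero]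
    · have hx0 : x ≠ 0 := fun h => hx1 (h ▸ zero_mem_of_isStarSet h1)
      have hxne : ‖x‖ ≠ 0 := norm_ne_zero_iff.mpr hx0
      have hθ1 : ‖‖x‖⁻¹ • x‖ = 1 := by
        rw [norm_smul, norm_inv, norm_norm, inv_mul_cancel₀ hxne]
      have hρ1top : radialFn A₁ (‖x‖⁻¹ • x) ≠ ⊤ := radialFn_ne_top_of_not_mem h1 hx1 hx0
      set θ := ‖x‖⁻¹ • x with hθdef
      set c := (radialFn A₁ θ).toReal with hcdef
      have hc0 : 0 ≤ c := ENNReal.toReal_nonneg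
      have ha : c • θ ∈ A₁ := hA₁.2 θ hθ1 hρ1top
      have hd1 : radialDist x A₁ = ‖x‖ - c := by
        simp only [radialDist, if_neg hx1, ← hθdef, ← hcdef]
      by_cases hx2 : x ∈ A₂
      · have hd2 : radialDist x A₂ = 0 := by simp only [radialDist, if_pos hx2]
        have hle : radialDist x A₂ - radialDist x A₁ ≤ 0 := by
          have := toReal_radialFn_le_norm hA₁ hx1 hx0
          rw [hd2, hd1]
          simp only [← hθdef, ← hcdef] at this
          linarith
        rw [ENNReal.ofReal_of_nonpos hle]
        exact zero_le
      · have hρ2top : radialFn A₂ θ ≠ ⊤ := radialFn_ne_top_of_not_mem h2 hx2 hx0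
        have hd2 : radialDist x A₂ = ‖x‖ - (radialFn A₂ θ).toReal := by
          simp only [radialDist, if_neg hx2, ← hθdef]
        by_cases haA2 : c • θ ∈ A₂
        · have h1le : ENNReal.ofReal c ≤ radialFn A₂ θ := le_radialFn hc0 haA2
          have h2le : c ≤ (radialFn A₂ θ).toReal := by
            rw [← ENNReal.toReal_ofReal hc0]
            exact ENNReal.toReal_mono hρ2top h1le
          have hle : radialDist x A₂ - radialDist x A₁ ≤ 0 := by
            rw [hd1, hd2]; linarith
          rw [ENNReal.ofReal_of_nonpos hle]
          exact zero_le
        · refine le_trans (le_of_eq ?_) (le_iSup _ (⟨c • θ, ha⟩ : A₁))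
          have hcpos : 0 < c := by
            rcases hc0.lt_or_eq with h | h
            · exact h
            · exfalso
              apply haA2
              rw [← h, zero_smul]
              exact zero_mem_of_isStarSet h2
          have hnorm : ‖c • θ‖ = c := by
            rw [norm_smul, hθ1, mul_one, Real.norm_eq_abs, abs_of_nonneg hc0]
          have hdir : ‖c • θ‖⁻¹ • (c • θ) = θ := by
            rw [hnorm, smul_smul, inv_mul_cancel₀ hcpos.ne', one_smul]
          have hda : radialDist (c • θ) A₂ = c - (radialFn A₂ θ).toReal := by
            simp only [radialDist, if_neg haA2, hnorm, smul_smul, inv_mul_cancel₀ hcpos.ne', one_smul]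
          rw [hda, hd1, hd2]
          ring_nf
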